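/- arXiv:0705.4080 — 2 statements merged into one kernel-verified Lean document; each statement's English description precedes it below -/
import Mathlib

section
/- Let σ be an aperiodic m-primitive substitution with minimal components Z₁,…,Z_m, and suppose (as can be arranged by passing to a power of σ) there are points w_i ∈ Z_i with σ(w_i) = w_i. Put r_i = w_i[−1], l_i = w_i[0] and W = ∪_{i=1}^m {x ∈ X_σ : x[−1] = r_i and x[0] = l_i}. Then W meets every T_σ-orbit, every point of W returns to W under some positive power of T_σ, and the return time to W is bounded: there exists k with X_σ = ∪_{n=0}^k T_σ^n W. -/
open Filter Topology

namespace PaperStmt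

variable {A : Type*} {B : Type*}

/-- Apply a substitution (letter-to-word map) to a word, by concatenation. -/
def substWord (σ : B → List A) (w : List B) : List A := w.flatMap σ

/-- `σ^n` applied to a word. -/
def substIter (σ : A → List A) (n : ℕ) (w : List A) : List A := (substWord σ)^[n] w

/-- `σ^n(a)` for a letter `a`. -/
def substPow (σ : A → List A) (n : ℕ) (a : A) : List A := substIter σ n [a]

/-- The language of a substitution: factors of some `σ^n(a)`, `n ≥ 1`. -/
def Lang (σ : A → List A) : Set (List A) :=
  {w | ∃ a : A, ∃ n : ℕ, 1 ≤ n ∧ w <:+: substIter σ n [a]}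

/-- The word `x[i], x[i+1], …, x[i+len-1]` read in a bi-infinite sequence. -/
def seg (x : ℤ → A) (i : ℤ) (len : ℕ) : List A :=
  (List.range len).map fun k => x (i + k)

/-- The phase space `X_σ` of the substitutional dynamical system. -/
def Xsub (σ : A → List A) : Set (ℤ → A) :=
  {x | ∀ n : ℕ, seg x (-(n : ℤ)) (2 * n + 1) ∈ Lang σ}

/-- `L(X_σ)`: all finite words occurring in elements of `X_σ`. -/
def LangX (σ : A → List A) : Set (List A) :=
  {w | ∃ x ∈ Xsub σ, ∃ i : ℤ, seg x i w.length = w}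

/-- The left shift `T`. -/
def shift (x : ℤ → A) : ℤ → A := fun k => x (k + 1)

/-- The power `T^i` of the left shift, `i ∈ ℤ`. -/
def shiftZ (i : ℤ) (x : ℤ → A) : ℤ → A := fun k => x (k + i)

/-- `(X_σ, T_σ)` has no periodic points. -/
def Aperiodic (σ : A → List A) : Prop :=
  ∀ x ∈ Xsub σ, ∀ p : ℕ, 0 < p → shiftZ (p : ℤ) x ≠ x

/-- The coordinate at which the `n`-th block of the bi-infinite concatenation
`⋯ σ(x_{-1}).σ(x_0) σ(x_1) ⋯` starts (block `0` starts at coordinate `0`). -/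
def blockStart (σ : B → List A) (x : ℤ → B) (n : ℤ) : ℤ :=
  if 0 ≤ n then ∑ j ∈ Finset.range n.toNat, ((σ (x (j : ℤ))).length : ℤ)
  else -∑ j ∈ Finset.range (-n).toNat, ((σ (x (-(j : ℤ) - 1))).length : ℤ)

/-- `y` is the image of the bi-infinite sequence `x` under the substitution `σ`,
i.e. `y = ⋯ σ(x_{-1}).σ(x_0)σ(x_1)⋯` with `σ(x_0)` starting at coordinate `0`. -/
def IsSubstImage (σ : B → List A) (x : ℤ → B) (y : ℤ → A) : Prop :=
  ∀ n : ℤ, seg y (blockStart σ x n) (σ (x n)).length = σ (x n)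

/-- `A_l`: the letters `a` with `|σ^n(a)| → ∞`. -/
def longLetters (σ : A → List A) : Set A :=
  {a | Tendsto (fun n => (substPow σ n a).length) atTop atTop}

/-- A minimal component of `(X_σ, T_σ)`: a nonempty closed shift-invariant subset of `X_σ`
that is minimal with respect to inclusion. -/
def MinimalComponent [TopologicalSpace A] (σ : A → List A) (Z : Set (ℤ → A)) : Prop :=
  Z.Nonempty ∧ IsClosed Z ∧ Z ⊆ Xsub σ ∧ shift '' Z = Z ∧
    ∀ Z' : Set (ℤ → A), Z'.Nonempty → IsClosed Z' → Z' ⊆ Z → shift '' Z' = Z' → Z' = Z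

/-- The element `T_σ^i σ^n([a])` of the Kakutani–Rokhlin partition `P_n`. -/
def piece (σ : A → List A) (n : ℕ) (a : A) (i : ℕ) : Set (ℤ → A) :=
  {x | ∃ y z : ℤ → A, y ∈ Xsub σ ∧ y 0 = a ∧
    IsSubstImage (substPow σ n) y z ∧ x = shiftZ (i : ℤ) z}

/-- An `m`-primitive substitution, with respect to a decomposition
`A = P 0 ⊔ … ⊔ P (m-1) ⊔ A0`. -/
def IsMPrimitive (σ : A → List A) (m : ℕ) (P : Fin m → Set A) (A0 : Set A) : Prop :=
  (∀ i j : Fin m, i ≠ j → Disjoint (P i) (P j)) ∧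
  (∀ i, Disjoint (P i) A0) ∧
  ((⋃ i, P i) ∪ A0 = Set.univ) ∧
  (∀ i, ∃ a ∈ P i, ∃ b ∈ P i, a ≠ b) ∧
  (∀ i, ∀ a ∈ P i, ∀ b ∈ σ a, b ∈ P i) ∧
  (∀ i, ∀ a ∈ P i, ∀ b ∈ P i, ∃ n : ℕ, 1 ≤ n ∧ b ∈ substPow σ n a) ∧
  (∀ a : A, ∃ n : ℕ, 0 < n ∧ ∃ i, ∃ b ∈ P i, b ∈ substPow σ n a) ∧
  (∀ k : ℕ, 1 ≤ k → Lang (substPow σ k) = Lang σ) ∧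
  (∀ a : A, [a] ∈ LangX σ)

/-- The set `Z_i` attached to the part `A_i = P i` of an `m`-primitive substitution. -/
def Zset (σ : A → List A) {m : ℕ} (P : Fin m → Set A) (i : Fin m) : Set (ℤ → A) :=
  {x | x ∈ Xsub σ ∧ ∀ n : ℕ, ∃ k : ℕ, 1 ≤ k ∧ ∃ a ∈ P i,
    seg x (-(n : ℤ)) (2 * n + 1) <:+: substPow σ k a}

/-- The clopen set `W = ∪_i [r_i.l_i]` built from fixed points `w i`. -/
def Wset (σ : A → List A) {m : ℕ} (w : Fin m → ℤ → A) : Set (ℤ → A) :=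
  ⋃ i : Fin m, {x | x ∈ Xsub σ ∧ x (-1) = w i (-1) ∧ x 0 = w i 0}

/-- A return word, given the letters `r i = w_i[-1]` and `l i = w_i[0]`. -/
def IsReturnWord (σ : A → List A) {m : ℕ} (r l : Fin m → A) (u : List A) : Prop :=
  u ∈ LangX σ ∧ u ≠ [] ∧ ∃ i j : Fin m,
    (r i :: (u ++ [l j])) ∈ LangX σ ∧
    u.head? = some (l i) ∧ u.getLast? = some (r j) ∧
    ∀ t : Fin m, ¬ ([r t, l t] <:+: u)

/-- A proper substitution. -/
def IsProper (σ : A → List A) : Prop :=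
  ∃ p : ℕ, 0 < p ∧ ∀ a : A,
    (∀ b c : A, [a, b] ∈ LangX σ → [a, c] ∈ LangX σ →
      (substPow σ p b).head? = (substPow σ p c).head?) ∧
    (∀ b c : A, [b, a] ∈ LangX σ → [c, a] ∈ LangX σ →
      (substPow σ p b).getLast? = (substPow σ p c).getLast?)

/-- Membership in the set `V` of words `v₁S₁v₂S₂v₃` with `v₁,v₂,v₃ ∈ A_l`, `S₁,S₂ ∈ A_s^*`. -/
def Vcond (σ : A → List A) : A × List A × A × List A × A → Prop
  | (v1, S1, v2, S2, v3) =>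
    v1 ∈ longLetters σ ∧ v2 ∈ longLetters σ ∧ v3 ∈ longLetters σ ∧
    (∀ c ∈ S1, c ∉ longLetters σ) ∧ (∀ c ∈ S2, c ∉ longLetters σ) ∧
    (v1 :: (S1 ++ v2 :: (S2 ++ [v3]))) ∈ LangX σ

/-- The cylinder set `[v₁S₁.v₂S₂v₃]`. -/
def Vbase (σ : A → List A) : A × List A × A × List A × A → Set (ℤ → A)
  | (v1, S1, v2, S2, v3) =>
    {x | x ∈ Xsub σ ∧
      seg x (-(1 + S1.length : ℤ)) (v1 :: (S1 ++ v2 :: (S2 ++ [v3]))).length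
        = v1 :: (S1 ++ v2 :: (S2 ++ [v3]))}

/-- The height `|σ^n(v₂S₂)|` of the tower over `[v₁S₁.v₂S₂v₃]` in `Ξ_n`. -/
def Vheight (σ : A → List A) (n : ℕ) : A × List A × A × List A × A → ℕ
  | (_, _, v2, S2, _) => (substWord (substPow σ n) (v2 :: S2)).length

/-- The element `T_σ^i σ^n([v₁S₁.v₂S₂v₃])` of the Kakutani–Rokhlin partition `Ξ_n`. -/
def Vpiece (σ : A → List A) (n : ℕ) (q : A × List A × A × List A × A) (i : ℕ) :
    Set (ℤ → A) :=
  {x | ∃ y z : ℤ → A, y ∈ Vbase σ q ∧ IsSubstImage (substPow σ n) y z ∧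
    x = shiftZ (i : ℤ) z}

/-- Membership in `Λ`. -/
def MemLambda (σ : A → List A) (s : ℕ → A × A) : Prop :=
  ∀ n : ℕ, [(s n).1, (s n).2] ∈ Lang σ ∧
    (σ (s (n + 1)).1).getLast? = some (s n).1 ∧
    (σ (s (n + 1)).2).head? = some (s n).2

/-- `x = w(s̄)` for `s̄ ∈ Λ`. -/
def IsLambdaPoint (σ : A → List A) (s : ℕ → A × A) (x : ℤ → A) : Prop :=
  ∀ n : ℕ, seg x (-((substPow σ n (s n).1).length : ℤ))
      ((substPow σ n (s n).1).length + (substPow σ n (s n).2).length)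
    = substPow σ n (s n).1 ++ substPow σ n (s n).2

/-- Membership in `M`: `i₀ = 0` and `a_j` occurs at position `i_{j+1}` of `σ(a_{j+1})`. -/
def MemM (σ : A → List A) (t : ℕ → A × ℕ) : Prop :=
  (t 0).2 = 0 ∧ ∀ j : ℕ, (σ (t (j + 1)).1)[(t (j + 1)).2]? = some (t j).1

/-- The cutting points `j_n` attached to an element of `M`. -/
def jSeq (σ : A → List A) (t : ℕ → A × ℕ) : ℕ → ℕ
  | 0 => 0
  | n + 1 =>
      jSeq σ t n + (substWord (substPow σ n) ((σ (t (n + 1)).1).take (t (n + 1)).2)).length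

/-- Membership in `M₀`: `j_n → ∞` and `|σ^n(a_n)| - j_n → ∞`. -/
def MZero (σ : A → List A) (t : ℕ → A × ℕ) : Prop :=
  MemM σ t ∧ ∀ N : ℕ, ∃ n0 : ℕ, ∀ n ≥ n0,
    N ≤ jSeq σ t n ∧ jSeq σ t n + N ≤ (substPow σ n (t n).1).length

/-- `x = w(m̄)` for `m̄ ∈ M₀`. -/
def IsMPoint (σ : A → List A) (t : ℕ → A × ℕ) (x : ℤ → A) : Prop :=
  ∀ n : ℕ, seg x (-(jSeq σ t n : ℤ)) (substPow σ n (t n).1).length = substPow σ n (t n).1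

section Aux

variable {A : Type*}

lemma seg_eq (x : ℤ → A) (i : ℤ) (len : ℕ) :
    seg x i len = (List.range len).map (fun k : ℕ => x (i + (k : ℤ))) := by
  simp [seg, List.map_flatMap, ← List.map_eq_flatMap]

lemma seg_congr {x y : ℤ → A} {i : ℤ} {len : ℕ}
    (h : ∀ k : ℕ, k < len → x (i + k) = y (i + k)) : seg x i len = seg y i len := by
  rw [seg_eq, seg_eq]
  exact List.map_congr_left fun k hk => h k (List.mem_range.mp hk)

lemma seg_shiftZ (x : ℤ → A) (j i : ℤ) (len : ℕ) :
    seg (shiftZ j x) i len = seg x (i + j) len := by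
  rw [seg_eq, seg_eq]
  refine List.map_congr_left fun k _ => ?_
  show x (i + (k : ℤ) + j) = x (i + j + (k : ℤ))
  congr 1; ring

lemma seg_append (x : ℤ → A) (i : ℤ) (a b : ℕ) :
    seg x i (a + b) = seg x i a ++ seg x (i + a) b := by
  rw [seg_eq, seg_eq, seg_eq, List.range_add, List.map_append, List.map_map]
  congr 1
  refine List.map_congr_left fun k _ => ?_
  simp only [Function.comp_apply]
  congr 1; push_cast; ring

lemma Lang.infix {σ : A → List A} {u v : List A} (h : u <:+: v) (hv : v ∈ Lang σ) :
    u ∈ Lang σ := by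
  obtain ⟨a, n, hn, hinf⟩ := hv
  exact ⟨a, n, hn, h.trans hinf⟩

lemma seg_infix (x : ℤ → A) (i : ℤ) (len : ℕ) (N : ℕ)
    (h1 : -(N : ℤ) ≤ i) (h2 : i + len ≤ N + 1) :
    seg x i len <:+: seg x (-(N : ℤ)) (2 * N + 1) := by
  set p : ℕ := (i + N).toNat with hp
  set q : ℕ := 2 * N + 1 - (p + len) with hq
  have hip : -(N : ℤ) + p = i := by omega
  have htot : 2 * N + 1 = p + (len + q) := by omega
  refine ⟨seg x (-(N : ℤ)) p, seg x (i + len) q, ?_⟩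
  rw [htot, seg_append, seg_append, hip, List.append_assoc]

lemma seg_mem_Lang {σ : A → List A} {x : ℤ → A} (hx : x ∈ Xsub σ) (i : ℤ) (len : ℕ) :
    seg x i len ∈ Lang σ :=
  Lang.infix (seg_infix x i len (i.natAbs + len) (by omega) (by omega)) (hx _)

lemma mem_Xsub_shiftZ {σ : A → List A} {x : ℤ → A} (hx : x ∈ Xsub σ) (j : ℤ) :
    shiftZ j x ∈ Xsub σ := by
  intro n
  rw [seg_shiftZ]
  exact seg_mem_Lang hx _ _

lemma shiftZ_shiftZ (a b : ℤ) (x : ℤ → A) : shiftZ a (shiftZ b x) = shiftZ (a + b) x := by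
  funext k
  show x (k + a + b) = x (k + (a + b))
  congr 1; ring

lemma shift_eq_shiftZ_one (x : ℤ → A) : shift x = shiftZ 1 x := rfl

lemma shiftZ_neg_one_shift (x : ℤ → A) : shiftZ (-1) (shift x) = x := by
  funext k
  show x (k + -1 + 1) = x k
  congr 1; ring

lemma shift_shiftZ_neg_one (x : ℤ → A) : shift (shiftZ (-1) x) = x := by
  funext k
  show x (k + 1 + -1) = x k
  congr 1; ring

variable [TopologicalSpace A] [DiscreteTopology A]

lemma continuous_shiftZ (j : ℤ) : Continuous (shiftZ j : (ℤ → A) → ℤ → A) :=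
  continuous_pi fun k => continuous_apply (k + j)

lemma isClosed_Xsub (σ : A → List A) : IsClosed (Xsub σ) := by
  rw [← isOpen_compl_iff, isOpen_iff_mem_nhds]
  intro x hx
  rw [Set.mem_compl_iff, Xsub, Set.mem_setOf_eq, not_forall] at hx
  obtain ⟨n, hn⟩ := hx
  refine mem_nhds_iff.mpr
    ⟨⋂ k ∈ Finset.range (2 * n + 1),
      (fun y : ℤ → A => y (-(n : ℤ) + k)) ⁻¹' {x (-(n : ℤ) + k)}, ?_, ?_, ?_⟩
  · intro y hy
    simp only [Set.mem_iInter, Set.mem_preimage, Set.mem_singleton_iff] at hy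
    intro hyX
    apply hn
    have : seg x (-(n : ℤ)) (2 * n + 1) = seg y (-(n : ℤ)) (2 * n + 1) :=
      seg_congr fun k hk => (hy k (Finset.mem_range.mpr hk)).symm
    rw [this]
    exact hyX n
  · exact isOpen_biInter_finset fun k _ =>
      (continuous_apply _).isOpen_preimage _ (isOpen_discrete _)
  · simp

/-- Key soft lemma: for any point of `X_σ` and either time direction, some word
`r_i l_i` occurs at positions `(d·n - 1, d·n)` for arbitrarily large `n`. -/
lemma key_occurrence {A : Type*} [Fintype A] [TopologicalSpace A] [DiscreteTopology A]
    (σ : A → List A) {m : ℕ} (Z : Fin m → Set (ℤ → A))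
    (hZall : ∀ Z' : Set (ℤ → A), MinimalComponent σ Z' → ∃ i, Z' = Z i)
    (w : Fin m → ℤ → A) (hw : ∀ i, w i ∈ Z i)
    {x : ℤ → A} (hx : x ∈ Xsub σ) (d : ℤ) (hd : d = 1 ∨ d = -1) (N : ℕ) :
    ∃ n : ℕ, N ≤ n ∧ ∃ i : Fin m,
      x (d * n - 1) = w i (-1) ∧ x (d * n) = w i 0 := by
  classical
  -- the pieces of the orbit and their closures
  set E : ℕ → Set (ℤ → A) := fun M => (fun n : ℕ => shiftZ (d * n) x) '' Set.Ici M with hE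
  set S : ℕ → Set (ℤ → A) := fun M => closure (E M) with hSdef
  have hE_sub : ∀ M, E M ⊆ Xsub σ := by
    rintro M _ ⟨n, _, rfl⟩
    exact mem_Xsub_shiftZ hx _
  have hS_sub : ∀ M, S M ⊆ Xsub σ := fun M =>
    closure_minimal (hE_sub M) (isClosed_Xsub σ)
  have hS_ne : ∀ M, (S M).Nonempty := fun M =>
    ⟨shiftZ (d * M) x, subset_closure ⟨M, le_refl M, rfl⟩⟩
  have hS_anti : Antitone S := fun a b hab =>
    closure_mono (Set.image_mono (Set.Ici_subset_Ici.mpr hab))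
  set L : Set (ℤ → A) := ⋂ M, S M with hLdef
  have hL_closed : IsClosed L := isClosed_iInter fun _ => isClosed_closure
  have hL_ne : L.Nonempty :=
    IsCompact.nonempty_iInter_of_directed_nonempty_isCompact_isClosed S
      hS_anti.directed_ge hS_ne (fun M => isClosed_closure.isCompact)
      (fun M => isClosed_closure)
  have hL_sub : L ⊆ Xsub σ := (Set.iInter_subset S 0).trans (hS_sub 0)
  -- L is invariant under all powers of the shift
  have hL_inv : ∀ k : ℤ, ∀ y ∈ L, shiftZ k y ∈ L := by
    intro k y hy
    refine Set.mem_iInter.mpr fun M => ?_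
    have h1 : y ∈ S (M + k.natAbs) := Set.mem_iInter.mp hy _
    have h2 : shiftZ k '' E (M + k.natAbs) ⊆ E M := by
      rintro _ ⟨_, ⟨n, hn, rfl⟩, rfl⟩
      rw [shiftZ_shiftZ]
      simp only [Set.mem_Ici] at hn
      refine ⟨((k + d * n) * d).toNat, ?_, ?_⟩
      · simp only [Set.mem_Ici]
        rcases hd with rfl | rfl <;> omega
      · show shiftZ (d * (((k + d * n) * d).toNat : ℤ)) x = shiftZ (k + d * n) x
        refine congrArg (fun t : ℤ => shiftZ t x) ?_
        rcases hd with rfl | rfl <;> omega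
    have h3 : shiftZ k y ∈ closure (shiftZ k '' E (M + k.natAbs)) :=
      image_closure_subset_closure_image (continuous_shiftZ k) ⟨y, h1, rfl⟩
    exact closure_mono h2 h3
  -- invariance gives `shift '' C = C`
  have inv_img : ∀ C : Set (ℤ → A), (∀ k : ℤ, ∀ y ∈ C, shiftZ k y ∈ C) →
      shift '' C = C := by
    intro C hC
    apply Set.Subset.antisymm
    · rintro _ ⟨y, hy, rfl⟩
      rw [shift_eq_shiftZ_one]
      exact hC 1 y hy
    · intro y hy
      exact ⟨shiftZ (-1) y, hC (-1) y hy, shift_shiftZ_neg_one y⟩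
  -- Zorn: find a minimal component inside L
  set 𝒮 : Set (Set (ℤ → A)) :=
    {C | C ⊆ L ∧ C.Nonempty ∧ IsClosed C ∧ shift '' C = C} with h𝒮
  have hLmem : L ∈ 𝒮 := ⟨subset_rfl, hL_ne, hL_closed, inv_img L hL_inv⟩
  have hlb : ∀ c ⊆ 𝒮, IsChain (· ⊆ ·) c → c.Nonempty →
      ∃ lb ∈ 𝒮, ∀ s ∈ c, lb ⊆ s := by
    intro c hc hchain hcne
    refine ⟨⋂₀ c, ⟨?_, ?_, ?_, ?_⟩, fun s hs => Set.sInter_subset_of_mem hs⟩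
    · obtain ⟨C, hC⟩ := hcne
      exact (Set.sInter_subset_of_mem hC).trans (hc hC).1
    · haveI : Nonempty c := hcne.to_subtype
      have hdir : DirectedOn (· ⊇ ·) c := by
        intro a ha b hb
        rcases hchain.total ha hb with h | h
        · exact ⟨a, ha, subset_rfl, h⟩
        · exact ⟨b, hb, h, subset_rfl⟩
      exact IsCompact.nonempty_sInter_of_directed_nonempty_isCompact_isClosed
        hdir (fun C hC => (hc hC).2.1)
        (fun C hC => (hc hC).2.2.1.isCompact) (fun C hC => (hc hC).2.2.1)
    · exact isClosed_sInter fun C hC => (hc hC).2.2.1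
    · apply Set.Subset.antisymm
      · rintro _ ⟨y, hy, rfl⟩
        intro C hC
        rw [← (hc hC).2.2.2]
        exact ⟨y, hy C hC, rfl⟩
      · intro y hy
        refine ⟨shiftZ (-1) y, ?_, shift_shiftZ_neg_one y⟩
        intro C hC
        have : y ∈ shift '' C := by rw [(hc hC).2.2.2]; exact hy C hC
        obtain ⟨u, hu, rfl⟩ := this
        rw [shiftZ_neg_one_shift]
        exact hu
  obtain ⟨Z', hZ'L, hZ'min⟩ := zorn_superset_nonempty 𝒮 hlb L hLmem
  obtain ⟨⟨hZ'L', hZ'ne, hZ'cl, hZ'img⟩, hZ'm⟩ := hZ'min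
  have hMC : MinimalComponent σ Z' := by
    refine ⟨hZ'ne, hZ'cl, hZ'L'.trans hL_sub, hZ'img, ?_⟩
    intro Z'' hne hcl hsub himg
    have hmem : Z'' ∈ 𝒮 := ⟨hsub.trans hZ'L', hne, hcl, himg⟩
    exact Set.Subset.antisymm hsub (hZ'm hmem hsub)
  obtain ⟨i, hi⟩ := hZall Z' hMC
  have hwi : w i ∈ S N := by
    have : w i ∈ Z' := by rw [hi]; exact hw i
    exact Set.mem_iInter.mp (hZ'L' this) N
  -- extract an occurrence from membership in the closure
  have hU : IsOpen ({y : ℤ → A | y (-1) = w i (-1) ∧ y 0 = w i 0}) := by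
    have : {y : ℤ → A | y (-1) = w i (-1) ∧ y 0 = w i 0} =
        ((fun y : ℤ → A => y (-1)) ⁻¹' {w i (-1)}) ∩
        ((fun y : ℤ → A => y 0) ⁻¹' {w i 0}) := by
      ext y; simp [Set.mem_inter_iff]
    rw [this]
    exact ((continuous_apply _).isOpen_preimage _ (isOpen_discrete _)).inter
      ((continuous_apply _).isOpen_preimage _ (isOpen_discrete _))
  have hmem : w i ∈ {y : ℤ → A | y (-1) = w i (-1) ∧ y 0 = w i 0} := ⟨rfl, rfl⟩
  obtain ⟨z, hz1, hz2⟩ := mem_closure_iff.mp hwi _ hU hmem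
  obtain ⟨n, hn, rfl⟩ := hz2
  refine ⟨n, hn, i, ?_, ?_⟩
  · have := hz1.1
    show x (d * n - 1) = w i (-1)
    rw [← this]
    show x (d * ↑n - 1) = x (-1 + d * ↑n)
    congr 1; ring
  · have := hz1.2
    rw [← this]
    show x (d * ↑n) = x (0 + d * ↑n)
    congr 1; ring

end Aux

/-- For an aperiodic `m`-primitive substitution with fixed points
`w_i ∈ Z_i`, the set `W = ∪_i [r_i.l_i]` meets every `T_σ`-orbit, consists of recurrent
points, and the return time to `W` is bounded. -/
theorem return_set_properties
    {A : Type*} [Fintype A] [TopologicalSpace A] [DiscreteTopology A]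
    (σ : A → List A) (hne : ∀ a, σ a ≠ [])
    (hunc : ¬ (Xsub σ).Countable) (hap : Aperiodic σ)
    (m : ℕ) (P : Fin m → Set A) (A0 : Set A) (hprim : IsMPrimitive σ m P A0)
    (Z : Fin m → Set (ℤ → A)) (hZ : ∀ i, MinimalComponent σ (Z i))
    (hZinj : Function.Injective Z)
    (hZall : ∀ Z' : Set (ℤ → A), MinimalComponent σ Z' → ∃ i, Z' = Z i)
    (w : Fin m → ℤ → A) (hw : ∀ i, w i ∈ Z i)
    (hfix : ∀ i, IsSubstImage σ (w i) (w i)) :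
    -- `W` meets every `T_σ`-orbit
    (∀ x ∈ Xsub σ, ∃ k : ℤ, shiftZ k x ∈ Wset σ w) ∧
    -- every point of `W` returns to `W`
    (∀ z ∈ Wset σ w, ∃ n : ℕ, 1 ≤ n ∧ shiftZ (n : ℤ) z ∈ Wset σ w) ∧
    -- the return time is bounded: `X_σ = ∪_{n=0}^k T_σ^n W`
    (∃ k : ℕ, ∀ x ∈ Xsub σ, ∃ n : ℕ, n ≤ k ∧ shiftZ (-(n : ℤ)) x ∈ Wset σ w) := by
  classical
  have mem_Wset : ∀ z : ℤ → A, z ∈ Wset σ w ↔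
      ∃ i : Fin m, z ∈ Xsub σ ∧ z (-1) = w i (-1) ∧ z 0 = w i 0 := by
    intro z
    simp only [Wset, Set.mem_iUnion, Set.mem_setOf_eq]
  refine ⟨?_, ?_, ?_⟩
  · -- W meets every orbit
    intro x hx
    obtain ⟨n, -, i, h1, h2⟩ :=
      key_occurrence σ Z hZall w hw hx 1 (Or.inl rfl) 0
    refine ⟨(n : ℤ), (mem_Wset _).mpr ⟨i, mem_Xsub_shiftZ hx _, ?_, ?_⟩⟩
    · show x (-1 + (n : ℤ)) = w i (-1)
      rw [← h1]; congr 1; ring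
    · show x (0 + (n : ℤ)) = w i 0
      rw [← h2]; congr 1; ring
  · -- every point of W returns to W
    intro z hz
    obtain ⟨j, hzX, -, -⟩ := (mem_Wset z).mp hz
    obtain ⟨n, hn1, i, h1, h2⟩ :=
      key_occurrence σ Z hZall w hw hzX 1 (Or.inl rfl) 1
    refine ⟨n, hn1, (mem_Wset _).mpr ⟨i, mem_Xsub_shiftZ hzX _, ?_, ?_⟩⟩
    · show z (-1 + (n : ℤ)) = w i (-1)
      rw [← h1]; congr 1; ring
    · show z (0 + (n : ℤ)) = w i 0
      rw [← h2]; congr 1; ring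
  · -- bounded return time
    by_contra hcon
    push_neg at hcon
    -- the clopen-in-Xsub avoidance sets
    set C : ℕ → Set (ℤ → A) := fun n => ⋂ i : Fin m,
      {x : ℤ → A | ¬ (x (-(n : ℤ) - 1) = w i (-1) ∧ x (-(n : ℤ)) = w i 0)} with hC
    have hC_closed : ∀ n, IsClosed (C n) := by
      intro n
      refine isClosed_iInter fun i => ?_
      have : {x : ℤ → A | ¬ (x (-(n : ℤ) - 1) = w i (-1) ∧ x (-(n : ℤ)) = w i 0)} =
          (((fun x : ℤ → A => x (-(n : ℤ) - 1)) ⁻¹' {w i (-1)}) ∩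
           ((fun x : ℤ → A => x (-(n : ℤ))) ⁻¹' {w i 0}))ᶜ := by
        ext x; simp
      rw [this]
      exact (IsOpen.inter
        ((continuous_apply _).isOpen_preimage _ (isOpen_discrete _))
        ((continuous_apply _).isOpen_preimage _ (isOpen_discrete _))).isClosed_compl
    -- membership in C n is equivalent to avoiding W at time -n (within Xsub)
    have hC_char : ∀ (x : ℤ → A), x ∈ Xsub σ → ∀ n : ℕ,
        (x ∈ C n ↔ shiftZ (-(n : ℤ)) x ∉ Wset σ w) := by
      intro x hxX n
      rw [mem_Wset]
      constructor
      · rintro hmem ⟨i, -, e1, e2⟩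
        have := Set.mem_iInter.mp hmem i
        apply this
        constructor
        · rw [← e1]; show x (-(n : ℤ) - 1) = x (-1 + -(n : ℤ)); congr 1; ring
        · rw [← e2]; show x (-(n : ℤ)) = x (0 + -(n : ℤ)); congr 1; ring
      · intro hnot
        refine Set.mem_iInter.mpr fun i => ?_
        rintro ⟨e1, e2⟩
        refine hnot ⟨i, mem_Xsub_shiftZ hxX _, ?_, ?_⟩
        · show x (-1 + -(n : ℤ)) = w i (-1)
          rw [← e1]; congr 1; ring
        · show x (0 + -(n : ℤ)) = w i 0
          rw [← e2]; congr 1; ring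
    -- the decreasing family of nonempty compact sets
    set Y : ℕ → Set (ℤ → A) := fun k =>
      Xsub σ ∩ ⋂ n ∈ Finset.range (k + 1), C n with hY
    have hY_closed : ∀ k, IsClosed (Y k) :=
      fun k => (isClosed_Xsub σ).inter
        (isClosed_biInter fun n _ => hC_closed n)
    have hY_ne : ∀ k, (Y k).Nonempty := by
      intro k
      obtain ⟨x, hxX, hxk⟩ := hcon k
      refine ⟨x, hxX, Set.mem_iInter₂.mpr fun n hn => ?_⟩
      have hnk : n ≤ k := by
        have := Finset.mem_range.mp hn
        omega
      exact (hC_char x hxX n).mpr (hxk n hnk)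
    have hY_anti : Antitone Y := by
      intro a b hab
      refine Set.inter_subset_inter_right _ ?_
      intro x hx
      refine Set.mem_iInter₂.mpr fun n hn => ?_
      exact Set.mem_iInter₂.mp hx n (Finset.mem_range.mpr
        (lt_of_lt_of_le (Finset.mem_range.mp hn) (by omega)))
    obtain ⟨x, hxmem⟩ :=
      IsCompact.nonempty_iInter_of_directed_nonempty_isCompact_isClosed Y
        hY_anti.directed_ge hY_ne (fun k => (hY_closed k).isCompact) hY_closed
    have hxX : x ∈ Xsub σ := (Set.mem_iInter.mp hxmem 0).1
    have hxC : ∀ n : ℕ, x ∈ C n := by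
      intro n
      exact Set.mem_iInter₂.mp (Set.mem_iInter.mp hxmem n).2 n
        (Finset.mem_range.mpr (by omega))
    obtain ⟨n, -, i, h1, h2⟩ :=
      key_occurrence σ Z hZall w hw hxX (-1) (Or.inr rfl) 0
    have := Set.mem_iInter.mp (hxC n) i
    apply this
    constructor
    · rw [← h1]; congr 1; ring
    · rw [← h2]; congr 1; ring

end PaperStmt
end

section
/- Let σ : A → A^+ be an aperiodic proper substitution with |σ^n| → ∞ as n → ∞. Then the sequence of Kakutani–Rokhlin partitions P_n = {T_σ^i σ^n([a]) : a ∈ A, 0 ≤ i < |σ^n(a)|} generates the topology of X_σ: for every m > 0 there exists n such that the block x[−m,m] is constant on each element of P_n. -/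
open Filter Topology

namespace PaperStmt

variable {A : Type*} {B : Type*}

lemma substWord_append (σ : B → List A) (u v : List B) :
    substWord σ (u ++ v) = substWord σ u ++ substWord σ v :=
  List.flatMap_append

lemma substIter_succ (σ : A → List A) (n : ℕ) (w : List A) :
    substIter σ (n + 1) w = substIter σ n (substWord σ w) := by
  simp [substIter, Function.iterate_succ_apply]

lemma substIter_append (σ : A → List A) (n : ℕ) (u v : List A) :
    substIter σ n (u ++ v) = substIter σ n u ++ substIter σ n v := by
  induction n generalizing u v with
  | zero => rfl
  | succ n ih => rw [substIter_succ, substWord_append, ih, substIter_succ, substIter_succ]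

lemma substIter_add (σ : A → List A) (m n : ℕ) (w : List A) :
    substIter σ (m + n) w = substIter σ m (substIter σ n w) :=
  Function.iterate_add_apply _ _ _ _

lemma substWord_ne_nil (σ : A → List A) (hne : ∀ a, σ a ≠ []) {w : List A} (hw : w ≠ []) :
    substWord σ w ≠ [] := by
  cases w with
  | nil => exact absurd rfl hw
  | cons a t => simp [substWord, hne a]

lemma substIter_ne_nil (σ : A → List A) (hne : ∀ a, σ a ≠ []) {w : List A} (hw : w ≠ [])
    (n : ℕ) : substIter σ n w ≠ [] := by
  induction n generalizing w with
  | zero => exact hw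
  | succ n ih => rw [substIter_succ]; exact ih (substWord_ne_nil σ hne hw)

lemma seg_getElem? (x : ℤ → A) (i : ℤ) (l : ℕ) (k : ℕ) (hk : k < l) :
    (seg x i l)[k]? = some (x (i + k)) := by
  simp only [seg]
  rw [List.getElem?_map]
  have h3 : (do let a ← List.range l; pure (↑a : ℤ))
      = List.map (Nat.cast : ℕ → ℤ) (List.range l) := by simp [List.map_eq_flatMap]
  rw [h3, List.getElem?_map, List.getElem?_range hk]
  rfl

lemma apply_eq_of_seg_eq {x : ℤ → A} {i : ℤ} {w : List A}
    (h : seg x i w.length = w) (k : ℕ) (hk : k < w.length) :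
    x (i + k) = w[k] := by
  have h1 := seg_getElem? x i w.length k hk
  rw [h, List.getElem?_eq_getElem hk] at h1
  exact (Option.some_injective _ h1).symm

lemma blockStart_zero (σ : B → List A) (y : ℤ → B) : blockStart σ y 0 = 0 := by
  simp [blockStart]

lemma blockStart_one (σ : B → List A) (y : ℤ → B) :
    blockStart σ y 1 = ((σ (y 0)).length : ℤ) := by
  norm_num [blockStart]

lemma blockStart_neg_one (σ : B → List A) (y : ℤ → B) :
    blockStart σ y (-1) = -((σ (y (-1))).length : ℤ) := by
  norm_num [blockStart]

lemma exists_append_of_getLast (σ : A → List A) (hne : ∀ a, σ a ≠ []) (p n0 : ℕ) (b r : A)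
    (h : (substPow σ p b).getLast? = some r) :
    ∃ u, substPow σ (n0 + p) b = u ++ substPow σ n0 r := by
  have hb : substPow σ p b ≠ [] := substIter_ne_nil σ hne (by simp) p
  have hdec : substPow σ p b = (substPow σ p b).dropLast ++ [r] := by
    rw [List.getLast?_eq_getLast hb] at h
    rw [← Option.some_injective _ h, List.dropLast_append_getLast]
  refine ⟨substIter σ n0 (substPow σ p b).dropLast, ?_⟩
  rw [substPow, substIter_add, ← substPow]
  conv_lhs => rw [hdec]
  rw [substIter_append]; rfl

lemma exists_cons_of_head (σ : A → List A) (p n0 : ℕ) (c l : A)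
    (h : (substPow σ p c).head? = some l) :
    ∃ v, substPow σ (n0 + p) c = substPow σ n0 l ++ v := by
  obtain ⟨t, ht⟩ : ∃ t, substPow σ p c = l :: t := by
    cases hc : substPow σ p c with
    | nil => rw [hc] at h; simp at h
    | cons hd tl => rw [hc] at h; simp at h; exact ⟨tl, by rw [h]⟩
  refine ⟨substIter σ n0 t, ?_⟩
  rw [substPow, substIter_add, ← substPow, ht]
  have : l :: t = [l] ++ t := rfl
  rw [this, substIter_append]; rfl

lemma seg_length (x : ℤ → A) (i : ℤ) (l : ℕ) : (seg x i l).length = l := by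
  simp [seg]

lemma seg_two (y : ℤ → A) (i : ℤ) : seg y i 2 = [y i, y (i + 1)] := by
  simp [seg, List.range_succ]

/-- For an aperiodic proper substitution with `|σ^n| → ∞`, the
Kakutani–Rokhlin partitions `P_n = {T_σ^i σ^n([a])}` generate the topology of `X_σ`:
for every `m > 0` there is `n` such that `x[-m,m]` is constant on each element of `P_n`. -/
theorem proper_substitution_partitions_generate_topology
    {A : Type*} [Fintype A] (σ : A → List A) (hne : ∀ a, σ a ≠ [])
    (hunc : ¬ (Xsub σ).Countable) (hap : Aperiodic σ) (hproper : IsProper σ)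
    (hmin : ∀ M : ℕ, ∃ n0 : ℕ, ∀ n ≥ n0, ∀ a : A, M ≤ (substPow σ n a).length) :
    ∀ m : ℕ, 0 < m → ∃ n : ℕ, ∀ a : A, ∀ i : ℕ, i < (substPow σ n a).length →
      ∀ x ∈ piece σ n a i, ∀ x' ∈ piece σ n a i,
        seg x (-(m : ℤ)) (2 * m + 1) = seg x' (-(m : ℤ)) (2 * m + 1) := by
  obtain ⟨p, hp0, hprop⟩ := hproper
  intro m hm
  obtain ⟨n0, hn0⟩ := hmin (m + 1)
  refine ⟨n0 + p, ?_⟩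
  intro a i hi x hx x' hx'
  obtain ⟨y, z, hy, hy0, hz, rfl⟩ := hx
  obtain ⟨y', z', hy', hy0', hz', rfl⟩ := hx'
  set n := n0 + p with hn
  set L := (substPow σ n a).length with hL
  have hlen : ∀ c : A, m + 1 ≤ (substPow σ n0 c).length := fun c => hn0 n0 le_rfl c
  have key : ∀ j : ℤ, -(m : ℤ) ≤ j → j < (L : ℤ) + m → z j = z' j := by
    intro j hj1 hj2
    rcases lt_or_ge j 0 with hneg | hpos
    · -- j < 0 : use the block at -1
      have hba : [y (-1), a] ∈ LangX σ := by
        refine ⟨y, hy, -1, ?_⟩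
        rw [show ([y (-1), a]).length = 2 from rfl, seg_two]
        norm_num [hy0]
      have hba' : [y' (-1), a] ∈ LangX σ := by
        refine ⟨y', hy', -1, ?_⟩
        rw [show ([y' (-1), a]).length = 2 from rfl, seg_two]
        norm_num [hy0']
      have hlast := (hprop a).2 (y (-1)) (y' (-1)) hba hba'
      have hbne : substPow σ p (y (-1)) ≠ [] := substIter_ne_nil σ hne (by simp) p
      obtain ⟨r, hr⟩ : ∃ r, (substPow σ p (y (-1))).getLast? = some r := by
        rw [List.getLast?_eq_getLast hbne]; exact ⟨_, rfl⟩
      have hr' : (substPow σ p (y' (-1))).getLast? = some r := by rw [← hlast]; exact hr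
      obtain ⟨u, hu⟩ := exists_append_of_getLast σ hne p n0 (y (-1)) r hr
      obtain ⟨u', hu'⟩ := exists_append_of_getLast σ hne p n0 (y' (-1)) r hr'
      set v := substPow σ n0 r with hvdef
      have hv : m + 1 ≤ v.length := hlen r
      have hzside : ∀ (yy zz : ℤ → A) (uu : List A),
          IsSubstImage (substPow σ n) yy zz →
          substPow σ n (yy (-1)) = uu ++ v →
          zz j = v[(v.length + j).toNat]'(by omega) := by
        intro yy zz uu hzz huu
        have h1 := hzz (-1)
        rw [blockStart_neg_one] at h1
        have hlb : (substPow σ n (yy (-1))).length = uu.length + v.length := by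
          rw [huu, List.length_append]
        have hk : ((uu.length + v.length + j).toNat) < (substPow σ n (yy (-1))).length := by
          omega
        have h2 := apply_eq_of_seg_eq h1 ((uu.length + v.length + j).toNat) hk
        have h3 : -((substPow σ n (yy (-1))).length : ℤ)
            + ((uu.length + v.length + j).toNat : ℤ) = j := by
          rw [hlb]; push_cast; omega
        rw [h3] at h2
        have h4 : uu.length ≤ ((uu.length : ℤ) + (v.length : ℤ) + j).toNat := by omega
        rw [h2, getElem_congr_coll huu, List.getElem_append_right h4]
        simp only [show ((uu.length : ℤ) + (v.length : ℤ) + j).toNat - uu.length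
            = ((v.length : ℤ) + j).toNat by omega]
      rw [hzside y z u hz hu, hzside y' z' u' hz' hu']
    · -- 0 ≤ j
      rcases lt_or_ge j (L : ℤ) with hmid | hhigh
      · -- middle: both read σ^n(a)
        have hzmid : ∀ (yy zz : ℤ → A), yy 0 = a → IsSubstImage (substPow σ n) yy zz →
            zz j = (substPow σ n a)[j.toNat]'(by omega) := by
          intro yy zz hyy0 hzz
          have h1 := hzz 0
          rw [blockStart_zero, hyy0] at h1
          have h2 := apply_eq_of_seg_eq h1 j.toNat (by omega)
          rw [show (0 : ℤ) + (j.toNat : ℤ) = j by omega] at h2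
          exact h2
        rw [hzmid y z hy0 hz, hzmid y' z' hy0' hz']
      · -- right edge: use the block at 1
        have hac : [a, y 1] ∈ LangX σ := by
          refine ⟨y, hy, 0, ?_⟩
          rw [show ([a, y 1]).length = 2 from rfl, seg_two]
          norm_num [hy0]
        have hac' : [a, y' 1] ∈ LangX σ := by
          refine ⟨y', hy', 0, ?_⟩
          rw [show ([a, y' 1]).length = 2 from rfl, seg_two]
          norm_num [hy0']
        have hhead := (hprop a).1 (y 1) (y' 1) hac hac'
        have hcne : substPow σ p (y 1) ≠ [] := substIter_ne_nil σ hne (by simp) p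
        obtain ⟨lt, hlt⟩ : ∃ lt, (substPow σ p (y 1)).head? = some lt := by
          cases hc : (substPow σ p (y 1)) with
          | nil => exact absurd hc hcne
          | cons hd tl => exact ⟨hd, by simp [hc]⟩
        have hlt' : (substPow σ p (y' 1)).head? = some lt := by rw [← hhead]; exact hlt
        obtain ⟨w, hw⟩ := exists_cons_of_head σ p n0 (y 1) lt hlt
        obtain ⟨w', hw'⟩ := exists_cons_of_head σ p n0 (y' 1) lt hlt'
        set v := substPow σ n0 lt with hvdef
        have hv : m + 1 ≤ v.length := hlen lt
        have hzside : ∀ (yy zz : ℤ → A) (ww : List A), yy 0 = a →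
            IsSubstImage (substPow σ n) yy zz →
            substPow σ n (yy 1) = v ++ ww →
            zz j = v[(j - L).toNat]'(by omega) := by
          intro yy zz ww hyy0 hzz hww
          have h1 := hzz 1
          rw [blockStart_one, hyy0] at h1
          have hlb : v.length + ww.length = (substPow σ n (yy 1)).length := by
            rw [hww, List.length_append]
          have hk : ((j - L).toNat) < (substPow σ n (yy 1)).length := by omega
          have h2 := apply_eq_of_seg_eq h1 ((j - L).toNat) hk
          have harg : (((substPow σ n a).length : ℕ) : ℤ) + (((j - L).toNat) : ℤ) = j := by
            rw [← hL]; push_cast; omega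
          have h2' : zz j = (substPow σ n (yy 1))[(j - L).toNat]'hk :=
            (congrArg zz harg.symm).trans h2
          rw [h2', getElem_congr_coll hww]
          exact List.getElem_append_left (by omega)
        rw [hzside y z w hy0 hz hw, hzside y' z' w' hy0' hz' hw']
  -- conclude
  have hi' : (i : ℤ) < L := by exact_mod_cast hi
  show seg (shiftZ (i : ℤ) z) (-(m : ℤ)) (2 * m + 1) = seg (shiftZ (i : ℤ) z') (-(m : ℤ)) (2 * m + 1)
  have hlen1 := seg_length (shiftZ (i : ℤ) z) (-(m : ℤ)) (2 * m + 1)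
  have hlen2 := seg_length (shiftZ (i : ℤ) z') (-(m : ℤ)) (2 * m + 1)
  apply List.ext_getElem (by rw [hlen1, hlen2])
  intro k h1 h2
  have hk : k < 2 * m + 1 := by rwa [hlen1] at h1
  have e1 : (seg (shiftZ (i : ℤ) z) (-(m : ℤ)) (2 * m + 1))[k]?
      = some (shiftZ (i : ℤ) z (-(m : ℤ) + k)) := seg_getElem? _ _ _ k hk
  have e2 : (seg (shiftZ (i : ℤ) z') (-(m : ℤ)) (2 * m + 1))[k]?
      = some (shiftZ (i : ℤ) z' (-(m : ℤ) + k)) := seg_getElem? _ _ _ k hk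
  rw [List.getElem?_eq_getElem h1] at e1
  rw [List.getElem?_eq_getElem h2] at e2
  have e3 : shiftZ (i : ℤ) z (-(m : ℤ) + k) = shiftZ (i : ℤ) z' (-(m : ℤ) + k) :=
    key (-(m : ℤ) + k + i) (by omega) (by omega)
  rw [e3] at e1
  rw [← e2] at e1
  exact Option.some_injective _ e1


end PaperStmt
end
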